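/- Let k ≥ 3 and suppose m ≤ c_k* n. Then the probability that H*_{n,m,k} has Property 𝓔 tends to 1 as n → ∞. -/

import Mathlib

open Filter Real

attribute [local instance] Classical.propDecidable

/-- Probability, under the uniform measure on `H*_{n,m,k}` outcomes (an outcome is the
sequence of `m` ordered `k`-tuples of vertices, each tuple uniform on `(Fin n)^k`),
that the resulting multihypergraph satisfies `P`. -/
noncomputable def probStar (n m k : ℕ) (P : (Fin m → Fin k → Fin n) → Prop) : ℝ :=
  ((Finset.univ.filter P).card : ℝ) / (Fintype.card (Fin m → Fin k → Fin n) : ℝ)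

/-- The set of vertices contained in the edges of `E'`. -/
def edgeVerts {n m k : ℕ} (ω : Fin m → Fin k → Fin n) (E' : Finset (Fin m)) : Finset (Fin n) :=
  E'.biUnion (fun i => Finset.image (ω i) Finset.univ)

/-- `x_s = log_k((k-1)e^k) / (log_k(n/s) - 1)`. -/
noncomputable def xval (k n : ℕ) (s : ℝ) : ℝ :=
  Real.logb k (((k : ℝ) - 1) * Real.exp k) / (Real.logb k ((n : ℝ) / s) - 1)

/-- Property `𝓔`: (1) every edge set `E'` with `log log n < |E'| < n/k` spans at least
`(k-1-x_{|E'|})|E'|` vertices; (2) every edge set `E'` with `|E'| ≤ log log n` spans at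
least `(k-1)|E'|` vertices. -/
def PropE {n m k : ℕ} (ω : Fin m → Fin k → Fin n) : Prop :=
  (∀ E' : Finset (Fin m),
    Real.log (Real.log n) < (E'.card : ℝ) → (E'.card : ℝ) < (n : ℝ) / k →
      ((k : ℝ) - 1 - xval k n E'.card) * E'.card ≤ ((edgeVerts ω E').card : ℝ)) ∧
  (∀ E' : Finset (Fin m), (E'.card : ℝ) ≤ Real.log (Real.log n) →
      ((k : ℝ) - 1) * E'.card ≤ ((edgeVerts ω E').card : ℝ))


open Asymptotics

set_option maxHeartbeats 1000000

noncomputable def tf (k n : ℕ) (s : ℕ) : ℝ :=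
  if (s:ℝ) ≤ Real.log (Real.log n) then ((k:ℝ)-1)*s
  else if (s:ℝ) < (n:ℝ)/k then ((k:ℝ)-1-xval k n s)*s else 0

noncomputable def vf (k n : ℕ) (s : ℕ) : ℕ := ⌈tf k n s⌉₊ - 1


lemma ck_lt_one (k : ℕ) (hk : 3 ≤ k) (ξ ck : ℝ) (hξpos : 0 < ξ)
    (hξ : (k : ℝ) = ξ * (1 - Real.exp (-ξ)) / (1 - Real.exp (-ξ) - ξ * Real.exp (-ξ)))
    (hξuniq : ∀ y : ℝ, 0 < y →
      (k : ℝ) = y * (1 - Real.exp (-y)) / (1 - Real.exp (-y) - y * Real.exp (-y)) → y = ξ)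
    (hck : ck = ξ / (k * (1 - Real.exp (-ξ)) ^ (k - 1))) :
    0 < ck ∧ ck < 1 := by
  have hk3 : (3:ℝ) ≤ (k:ℝ) := by exact_mod_cast hk
  have hkpos : (0:ℝ) < k := by linarith
  have hD : ∀ t : ℝ, 0 < t → 0 < 1 - Real.exp (-t) - t * Real.exp (-t) := by
    intro t ht
    have h1 : t + 1 < Real.exp t := Real.add_one_lt_exp (ne_of_gt ht)
    have h2 : 0 < Real.exp (-t) := Real.exp_pos _
    have h3 : Real.exp (-t) * Real.exp t = 1 := by
      rw [← Real.exp_add]; simp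
    nlinarith [h2, h1]
  have hEq : ∀ t : ℝ, 0 < t →
      ((k : ℝ) = t * (1 - Real.exp (-t)) / (1 - Real.exp (-t) - t * Real.exp (-t)) ↔
        Real.exp (-t) * ((k:ℝ) + ((k:ℝ)-1) * t) = (k:ℝ) - t) := by
    intro t ht
    have hDt := hD t ht
    rw [eq_div_iff (ne_of_gt hDt)]
    constructor
    · intro h; nlinarith [h]
    · intro h; nlinarith [h]
  set G : ℝ → ℝ := fun t => Real.exp (-t) * ((k:ℝ) + ((k:ℝ)-1) * t) - ((k:ℝ) - t) with hG
  have hGcont : Continuous G := by fun_prop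
  have hGk1 : G ((k:ℝ)-1) < 0 := by
    have hx : (2:ℝ) ≤ (k:ℝ)-1 := by linarith
    have hxpos : (0:ℝ) ≤ (k:ℝ)-1 := by linarith
    have hsum := Real.sum_le_exp_of_nonneg hxpos 6
    have hs : ∑ i ∈ Finset.range 6, ((k:ℝ)-1) ^ i / (Nat.factorial i) =
        1 + ((k:ℝ)-1) + ((k:ℝ)-1)^2/2 + ((k:ℝ)-1)^3/6 + ((k:ℝ)-1)^4/24 + ((k:ℝ)-1)^5/120 := by
      norm_num [Finset.sum_range_succ, Nat.factorial]
    rw [hs] at hsum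
    have hcube : (2:ℝ)^3 ≤ ((k:ℝ)-1)^3 := pow_le_pow_left₀ (by norm_num) hx 3
    have hexp : ((k:ℝ)-1)^2 + ((k:ℝ)-1) + 1 < Real.exp ((k:ℝ)-1) := by
      nlinarith [hcube, sq_nonneg ((k:ℝ)-1), hx, pow_pos (show (0:ℝ) < (k:ℝ)-1 by linarith) 5,
        pow_pos (show (0:ℝ) < (k:ℝ)-1 by linarith) 4]
    have h2 : Real.exp (-((k:ℝ)-1)) * Real.exp ((k:ℝ)-1) = 1 := by
      rw [← Real.exp_add]; simp
    have h3 : 0 < Real.exp (-((k:ℝ)-1)) := Real.exp_pos _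
    have hlt : (k:ℝ) + ((k:ℝ)-1) * ((k:ℝ)-1) < Real.exp ((k:ℝ)-1) := by nlinarith [hexp]
    have : Real.exp (-((k:ℝ)-1)) * ((k:ℝ) + ((k:ℝ)-1) * ((k:ℝ)-1)) < 1 := by
      calc Real.exp (-((k:ℝ)-1)) * ((k:ℝ) + ((k:ℝ)-1) * ((k:ℝ)-1))
          < Real.exp (-((k:ℝ)-1)) * Real.exp ((k:ℝ)-1) := by
            apply mul_lt_mul_of_pos_left hlt h3
        _ = 1 := h2
    simp only [hG]
    nlinarith [this]
  have hGk : G (k:ℝ) > 0 := by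
    simp only [hG]
    have h3 : 0 < Real.exp (-(k:ℝ)) := Real.exp_pos _
    have h4 : (0:ℝ) < (k:ℝ) + ((k:ℝ)-1) * (k:ℝ) := by nlinarith
    nlinarith [mul_pos h3 h4]
  have hroot : ∃ r ∈ Set.Ioo ((k:ℝ)-1) (k:ℝ), G r = 0 := by
    have hle : (k:ℝ)-1 ≤ (k:ℝ) := by linarith
    have hiv := intermediate_value_Ioo hle hGcont.continuousOn
    have hmem : (0:ℝ) ∈ Set.Ioo (G ((k:ℝ)-1)) (G (k:ℝ)) := ⟨hGk1, hGk⟩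
    obtain ⟨r, hr, hr0⟩ := hiv hmem
    exact ⟨r, hr, hr0⟩
  obtain ⟨r, ⟨hr1, hr2⟩, hr0⟩ := hroot
  have hrpos : 0 < r := by linarith
  have hreq : (k : ℝ) = r * (1 - Real.exp (-r)) / (1 - Real.exp (-r) - r * Real.exp (-r)) := by
    rw [hEq r hrpos]
    simp only [hG] at hr0
    linarith [hr0]
  have hrξ : r = ξ := hξuniq r hrpos hreq
  subst hrξ
  -- now k-1 < r < k ; rename
  have heq : Real.exp (-r) * ((k:ℝ) + ((k:ℝ)-1) * r) = (k:ℝ) - r := by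
    simp only [hG] at hr0; linarith [hr0]
  have hθpos : 0 < 1 - Real.exp (-r) := by
    have : Real.exp (-r) < 1 := by
      rw [← Real.exp_zero]
      exact Real.exp_lt_exp.mpr (by linarith)
    linarith
  set θ := 1 - Real.exp (-r) with hθ
  set a := (k:ℝ) + ((k:ℝ)-1) * r with ha
  have hapos : 0 < a := by nlinarith
  have hθeq : θ = (k:ℝ) * r / a := by
    have hexpr : Real.exp (-r) = ((k:ℝ) - r) / a := by
      field_simp at heq ⊢; linarith [heq]
    rw [hθ, hexpr]
    field_simp
    ring
  set δ := ((k:ℝ) - r) / ((k:ℝ) * r) with hδ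
  have hδpos : 0 < δ := by
    apply div_pos (by linarith) (by positivity)
  have hδsmall : δ * ((k:ℝ) * ((k:ℝ)-1)) < 1 := by
    rw [hδ]
    rw [div_mul_eq_mul_div, div_lt_one (by positivity)]
    have e1 : (k:ℝ) - r < 1 := by linarith
    have e2 : (k:ℝ)*((k:ℝ)-1) < (k:ℝ)*r := by nlinarith
    have e3 : (0:ℝ) < (k:ℝ)*((k:ℝ)-1) := by nlinarith
    nlinarith [mul_lt_mul_of_pos_right e1 e3]
  set y := ((k:ℝ)-1) * δ with hy
  have hy0 : 0 ≤ y := mul_nonneg (by linarith) hδpos.le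
  have hy1 : y ≤ 1 := by nlinarith
  -- (1+δ)^(k-1) ≤ exp y
  have hstep1 : (1+δ)^(k-1) ≤ Real.exp y := by
    have h1 : (1+δ) ≤ Real.exp δ := by
      have := Real.add_one_le_exp δ; linarith
    have h2 : (1+δ)^(k-1) ≤ (Real.exp δ)^(k-1) :=
      pow_le_pow_left₀ (by positivity) h1 (k-1)
    have h3 : (Real.exp δ)^(k-1) = Real.exp (((k-1:ℕ):ℝ) * δ) := by
      rw [Real.exp_nat_mul]
    have hcast : ((k-1:ℕ):ℝ) = (k:ℝ) - 1 := by
      have : (1:ℕ) ≤ k := by omega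
      push_cast [Nat.cast_sub this]
      ring
    rw [h3, hcast] at h2
    exact h2
  have hstep2 : Real.exp y ≤ 1 + y + (3/4) * y^2 := by
    have := Real.exp_bound' hy0 hy1 (n := 2) (by norm_num)
    have hs : ∑ m ∈ Finset.range 2, y ^ m / (Nat.factorial m) = 1 + y := by
      norm_num [Finset.sum_range_succ, Nat.factorial]
    rw [hs] at this
    calc Real.exp y ≤ (1 + y) + y^2 * (2+1) / ((Nat.factorial 2) * 2) := this
      _ = 1 + y + (3/4) * y^2 := by norm_num [Nat.factorial]; ring
  have hstep3 : 1 + y + (3/4) * y^2 < 1 + (k:ℝ) * δ := by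
    rw [hy]
    nlinarith [hδpos, hδsmall, sq_nonneg δ]
  have hstep4 : 1 + (k:ℝ) * δ = (k:ℝ) / r := by
    rw [hδ]; field_simp; ring
  have hmain : (1+δ)^(k-1) < (k:ℝ)/r := by
    calc (1+δ)^(k-1) ≤ Real.exp y := hstep1
      _ ≤ 1 + y + (3/4)*y^2 := hstep2
      _ < 1 + (k:ℝ)*δ := hstep3
      _ = (k:ℝ)/r := hstep4
  -- translate: (1+δ) = a/(k r)
  have h1δ : 1 + δ = a / ((k:ℝ)*r) := by
    rw [hδ, ha]; field_simp; ring
  set p := ((k:ℝ)*r)^(k-1) with hp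
  set q := a^(k-1) with hq
  have hppos : 0 < p := by positivity
  have hqpos : 0 < q := by positivity
  have hqp : q / p < (k:ℝ)/r := by
    have : (1+δ)^(k-1) = q/p := by rw [h1δ, div_pow]
    rwa [this] at hmain
  have hθpow : θ^(k-1) = p / q := by
    rw [hθeq, div_pow]
  have hkey : r < (k:ℝ) * θ^(k-1) := by
    rw [hθpow]
    rw [div_lt_div_iff₀ (by positivity) hrpos] at hqp
    rw [mul_div_assoc', lt_div_iff₀ hqpos]
    nlinarith [hqp]
  constructor
  · rw [hck]; positivity
  · rw [hck, div_lt_one (by positivity)]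
    exact hkey

lemma filter_pi_card (n m k : ℕ) (E' : Finset (Fin m)) (S : Finset (Fin n)) :
    (Finset.univ.filter (fun ω : Fin m → Fin k → Fin n => ∀ i ∈ E', ∀ j, ω i j ∈ S)).card
      = (S.card ^ k) ^ E'.card * (n ^ k) ^ (m - E'.card) := by
  classical
  have hset : (Finset.univ.filter (fun ω : Fin m → Fin k → Fin n => ∀ i ∈ E', ∀ j, ω i j ∈ S))
      = Fintype.piFinset (fun i => if i ∈ E' then Fintype.piFinset (fun _ : Fin k => S)
          else Finset.univ) := by
    ext ω
    simp only [Finset.mem_filter, Finset.mem_univ, true_and, Fintype.mem_piFinset]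
    constructor
    · intro h i
      by_cases hi : i ∈ E'
      · simp only [hi, if_true, Fintype.mem_piFinset]
        exact h i hi
      · simp [hi]
    · intro h i hi j
      have := h i
      simp only [hi, if_true, Fintype.mem_piFinset] at this
      exact this j
  rw [hset, Fintype.card_piFinset]
  have hterm : ∀ i : Fin m,
      (if i ∈ E' then Fintype.piFinset (fun _ : Fin k => S) else Finset.univ).card
        = if i ∈ E' then S.card ^ k else n ^ k := by
    intro i
    by_cases hi : i ∈ E'
    · simp [hi, Fintype.card_piFinset_const]
    · simp [hi, Finset.card_univ]
  simp only [hterm]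
  rw [← Finset.prod_filter_mul_prod_filter_not Finset.univ (· ∈ E')]
  have h1 : Finset.univ.filter (· ∈ E') = E' := by ext x; simp
  have h2 : Finset.univ.filter (fun x => ¬ x ∈ E') = Finset.univ \ E' := by ext x; simp
  rw [h1, h2]
  rw [Finset.prod_congr rfl (fun x hx => if_pos hx),
    Finset.prod_congr rfl (fun x (hx : x ∈ Finset.univ \ E') =>
      if_neg (Finset.mem_sdiff.mp hx).2),
    Finset.prod_const, Finset.prod_const, Finset.card_sdiff_of_subset (Finset.subset_univ _),
    Finset.card_univ, Fintype.card_fin]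

lemma count_small_span (n m k : ℕ) (E' : Finset (Fin m)) (v : ℕ) (hv : v ≤ n) :
    (Finset.univ.filter
        (fun ω : Fin m → Fin k → Fin n => (edgeVerts ω E').card ≤ v)).card
      ≤ n.choose v * ((v ^ k) ^ E'.card * (n ^ k) ^ (m - E'.card)) := by
  classical
  have hsub : (Finset.univ.filter
        (fun ω : Fin m → Fin k → Fin n => (edgeVerts ω E').card ≤ v))
      ⊆ (Finset.powersetCard v (Finset.univ : Finset (Fin n))).biUnion
          (fun S => Finset.univ.filter
            (fun ω : Fin m → Fin k → Fin n => ∀ i ∈ E', ∀ j, ω i j ∈ S)) := by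
    intro ω hω
    rw [Finset.mem_filter] at hω
    obtain ⟨u, hu1, hu2, hu3⟩ := Finset.exists_subsuperset_card_eq
      (Finset.subset_univ (edgeVerts ω E')) hω.2 (by simpa using hv)
    rw [Finset.mem_biUnion]
    refine ⟨u, Finset.mem_powersetCard.mpr ⟨hu2, hu3⟩, ?_⟩
    rw [Finset.mem_filter]
    refine ⟨Finset.mem_univ _, fun i hi j => ?_⟩
    apply hu1
    exact Finset.mem_biUnion.mpr ⟨i, hi, Finset.mem_image.mpr ⟨j, Finset.mem_univ _, rfl⟩⟩
  calc (Finset.univ.filter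
        (fun ω : Fin m → Fin k → Fin n => (edgeVerts ω E').card ≤ v)).card
      ≤ ((Finset.powersetCard v (Finset.univ : Finset (Fin n))).biUnion
          (fun S => Finset.univ.filter
            (fun ω : Fin m → Fin k → Fin n => ∀ i ∈ E', ∀ j, ω i j ∈ S))).card :=
        Finset.card_le_card hsub
    _ ≤ ∑ S ∈ Finset.powersetCard v (Finset.univ : Finset (Fin n)),
          (Finset.univ.filter
            (fun ω : Fin m → Fin k → Fin n => ∀ i ∈ E', ∀ j, ω i j ∈ S)).card :=
        Finset.card_biUnion_le
    _ ≤ ∑ S ∈ Finset.powersetCard v (Finset.univ : Finset (Fin n)),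
          ((v ^ k) ^ E'.card * (n ^ k) ^ (m - E'.card)) := by
        apply Finset.sum_le_sum
        intro S hS
        rw [filter_pi_card]
        rw [(Finset.mem_powersetCard.mp hS).2]
    _ = n.choose v * ((v ^ k) ^ E'.card * (n ^ k) ^ (m - E'.card)) := by
        rw [Finset.sum_const, Finset.card_powersetCard, Finset.card_univ,
          Fintype.card_fin, smul_eq_mul]

lemma pow_le_factorial_exp : ∀ b : ℕ, ((b:ℝ))^b ≤ (Nat.factorial b : ℝ) * Real.exp b := by
  intro b
  induction b with
  | zero => simp
  | succ b ih =>
    have key : ((b:ℝ)+1)^b ≤ ((b:ℝ))^b * Real.exp 1 := by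
      rcases Nat.eq_zero_or_pos b with hb | hb
      · subst hb; simpa using Real.one_le_exp (zero_le_one)
      · have hbR : (0:ℝ) < b := by exact_mod_cast hb
        have heq : ((b:ℝ)+1) = (b:ℝ) * (1 + 1/(b:ℝ)) := by field_simp
        rw [heq, mul_pow]
        have h1 : (1 + 1/(b:ℝ)) ≤ Real.exp (1/(b:ℝ)) := by
          have := Real.add_one_le_exp (1/(b:ℝ)); linarith
        have h2 : (1 + 1/(b:ℝ))^b ≤ (Real.exp (1/(b:ℝ)))^b :=
          pow_le_pow_left₀ (by positivity) h1 b
        have h3 : (Real.exp (1/(b:ℝ)))^b = Real.exp ((b:ℝ) * (1/(b:ℝ))) := by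
          rw [Real.exp_nat_mul]
        have h4 : (b:ℝ) * (1/(b:ℝ)) = 1 := by field_simp
        rw [h3, h4] at h2
        have hbb : (0:ℝ) ≤ (b:ℝ)^b := by positivity
        nlinarith [h2, hbb]
    have hfact : (Nat.factorial (b+1) : ℝ) = ((b:ℝ)+1) * (Nat.factorial b : ℝ) := by
      rw [Nat.factorial_succ]; push_cast; ring
    have hexp : Real.exp ((b:ℕ)+1 : ℕ) = Real.exp b * Real.exp 1 := by
      push_cast; rw [← Real.exp_add]
    calc ((((b:ℕ)+1:ℕ)):ℝ)^((b:ℕ)+1:ℕ)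
        = ((b:ℝ)+1) * ((b:ℝ)+1)^b := by push_cast; ring
      _ ≤ ((b:ℝ)+1) * ((b:ℝ)^b * Real.exp 1) := by
          apply mul_le_mul_of_nonneg_left key (by positivity)
      _ ≤ ((b:ℝ)+1) * ((Nat.factorial b * Real.exp b) * Real.exp 1) := by
          apply mul_le_mul_of_nonneg_left _ (by positivity)
          apply mul_le_mul_of_nonneg_right ih (Real.exp_pos 1).le
      _ = (Nat.factorial (b+1) : ℝ) * Real.exp ((b:ℕ)+1:ℕ) := by
          rw [hfact, hexp]; ring
lemma choose_le_exp (a b : ℕ) (hb : 1 ≤ b) (ha : 1 ≤ a) :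
    (a.choose b : ℝ) ≤ Real.exp ((b:ℝ) * (1 + Real.log a - Real.log b)) := by
  have haR : (0:ℝ) < a := by exact_mod_cast ha
  have hbR : (0:ℝ) < b := by exact_mod_cast hb
  have h1 : (a.choose b : ℝ) ≤ (a:ℝ)^b / (Nat.factorial b : ℝ) := by
    exact_mod_cast Nat.choose_le_pow_div b a
  have h2 : (a:ℝ)^b / (Nat.factorial b : ℝ) ≤ (a:ℝ)^b * Real.exp b / (b:ℝ)^b := by
    rw [div_le_div_iff₀ (by positivity) (by positivity)]
    have := pow_le_factorial_exp b
    have hAb : (0:ℝ) ≤ (a:ℝ)^b := by positivity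
    calc (a:ℝ)^b * (b:ℝ)^b ≤ (a:ℝ)^b * ((Nat.factorial b : ℝ) * Real.exp b) :=
          mul_le_mul_of_nonneg_left this hAb
      _ = (a:ℝ)^b * Real.exp b * (Nat.factorial b : ℝ) := by ring
  have h3 : (a:ℝ)^b * Real.exp b / (b:ℝ)^b
      = Real.exp ((b:ℝ) * (1 + Real.log a - Real.log b)) := by
    have hA : (a:ℝ)^b = Real.exp ((b:ℝ) * Real.log a) := by
      rw [← Real.exp_log (show (0:ℝ) < (a:ℝ)^b by positivity), Real.log_pow]
    have hB : (b:ℝ)^b = Real.exp ((b:ℝ) * Real.log b) := by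
      rw [← Real.exp_log (show (0:ℝ) < (b:ℝ)^b by positivity), Real.log_pow]
    rw [hA, hB]
    rw [← Real.exp_add, ← Real.exp_sub]
    congr 1
    push_cast
    ring
  calc (a.choose b : ℝ) ≤ (a:ℝ)^b / (Nat.factorial b : ℝ) := h1
    _ ≤ (a:ℝ)^b * Real.exp b / (b:ℝ)^b := h2
    _ = _ := h3

lemma key_log_ineq (k : ℕ) (hk : 3 ≤ k) (c S V N Mm x : ℝ)
    (hS : 1 ≤ S) (hV1 : 1 ≤ V) (hVt : V ≤ ((k:ℝ)-1-x)*S) (hx : 0 < x)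
    (hN : (k:ℝ)*S < N) (hMm : 1 ≤ Mm) (hMmc : Mm ≤ c*N) (hc : 0 < c)
    (hxdef : x * (Real.log (N/S) - Real.log k) = Real.log ((k:ℝ)-1) + k) :
    S*(1+Real.log Mm - Real.log S) + V*(1+Real.log N - Real.log V)
      + ((k:ℝ)*S)*(Real.log V - Real.log N) ≤ S * Real.log c := by
  have hk3 : (3:ℝ) ≤ (k:ℝ) := by exact_mod_cast hk
  have hSpos : 0 < S := by linarith
  set t := ((k:ℝ)-1-x)*S with ht
  have htpos : 0 < t := lt_of_lt_of_le (by linarith) hVt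
  have hxk : x < (k:ℝ)-1 := by
    by_contra h
    push_neg at h
    nlinarith [hVt, hV1]
  have hNpos : 0 < N := by nlinarith
  have hVpos : (0:ℝ) < V := by linarith
  have htk1S : t ≤ ((k:ℝ)-1)*S := by nlinarith
  have htN : t < N := by nlinarith
  have hVN : V < N := by nlinarith
  have hlV_lt : Real.log V ≤ Real.log t := Real.log_le_log hVpos hVt
  have hlVN : Real.log V ≤ Real.log N := Real.log_le_log hVpos hVN.le
  have hltN : Real.log t ≤ Real.log N := Real.log_le_log htpos htN.le
  have hlt_up : Real.log t ≤ Real.log ((k:ℝ)-1) + Real.log S := by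
    rw [← Real.log_mul (show ((k:ℝ)-1) ≠ 0 by linarith) (ne_of_gt hSpos)]
    exact Real.log_le_log htpos htk1S
  have hlM : Real.log Mm ≤ Real.log c + Real.log N := by
    have h := Real.log_le_log (show (0:ℝ) < Mm by linarith) hMmc
    rwa [Real.log_mul (ne_of_gt hc) (ne_of_gt hNpos)] at h
  have hlogdiv : Real.log (N/S) = Real.log N - Real.log S :=
    Real.log_div (ne_of_gt hNpos) (ne_of_gt hSpos)
  have hlogk : Real.log ((k:ℝ)-1) ≤ Real.log (k:ℝ) :=
    Real.log_le_log (by linarith) (by linarith)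
  have hkSt : 0 ≤ (k:ℝ)*S - t := by nlinarith
  have step1 : V*(1+Real.log N - Real.log V) + ((k:ℝ)*S)*(Real.log V - Real.log N)
      ≤ t*(1+Real.log N - Real.log t) + ((k:ℝ)*S)*(Real.log t - Real.log N) := by
    nlinarith [mul_nonneg hkSt (sub_nonneg.mpr hlV_lt),
      mul_nonneg (sub_nonneg.mpr hVt) (sub_nonneg.mpr hlVN)]
  have hq := hxdef
  rw [hlogdiv] at hq
  have hdiv : 1 + (Real.log N - Real.log S) + ((k:ℝ)-1-x)
      + (1+x)*(Real.log ((k:ℝ)-1) + Real.log S - Real.log N) ≤ 0 := by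
    nlinarith [hq, hx, hlogk, mul_nonneg hx.le (sub_nonneg.mpr hlogk)]
  have hSA0 : S * (1 + (Real.log N - Real.log S) + ((k:ℝ)-1-x)
      + (1+x)*(Real.log ((k:ℝ)-1) + Real.log S - Real.log N)) ≤ 0 := by
    rcases le_or_gt (1 + (Real.log N - Real.log S) + ((k:ℝ)-1-x)
      + (1+x)*(Real.log ((k:ℝ)-1) + Real.log S - Real.log N)) 0 with h | h
    · exact mul_nonpos_of_nonneg_of_nonpos hSpos.le h
    · linarith [hdiv]
  have hrem : S*(1+Real.log N - Real.log S) + t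
      + (((k:ℝ)*S - t))*(Real.log ((k:ℝ)-1) + Real.log S - Real.log N) ≤ 0 := by
    have hEq2 : ((k:ℝ)*S - t) = (1+x)*S := by rw [ht]; ring
    rw [hEq2]
    nlinarith [hSA0]
  have h2 : ((k:ℝ)*S - t)*(Real.log t - Real.log N)
      ≤ ((k:ℝ)*S - t)*(Real.log ((k:ℝ)-1) + Real.log S - Real.log N) :=
    mul_le_mul_of_nonneg_left (by linarith) hkSt
  have hlM' : S * Real.log Mm ≤ S * (Real.log c + Real.log N) :=
    mul_le_mul_of_nonneg_left hlM hSpos.le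
  nlinarith [step1, hlM', hrem, h2]

lemma regimeA (k n m : ℕ) (c : ℝ) (hk : 3 ≤ k) (hc0 : 0 ≤ c) (hc1 : c ≤ 1)
    (hmc : (m:ℝ) ≤ c*(n:ℝ)) (hn1 : 1 ≤ n) (s : ℕ) (hs1 : 1 ≤ s)
    (hreg : (s:ℝ) ≤ Real.log (Real.log n)) (hL1 : 1 ≤ Real.log (Real.log n)) :
    (m.choose s : ℝ) * (n.choose (vf k n s) : ℝ) * ((vf k n s : ℝ))^(k*s) / (n:ℝ)^(k*s)
      ≤ Real.exp ((k:ℝ)*((k:ℝ)-1)*(Real.log (Real.log n))^2) / (n:ℝ) := by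
  set L := Real.log (Real.log n) with hLdef
  have hnR : (1:ℝ) ≤ (n:ℝ) := by exact_mod_cast hn1
  have hsR : (1:ℝ) ≤ (s:ℝ) := by exact_mod_cast hs1
  have hkR : (3:ℝ) ≤ (k:ℝ) := by exact_mod_cast hk
  -- identify vf
  have htf : tf k n s = ((k:ℝ)-1)*s := by rw [tf, if_pos hreg]
  have hcast : ((k:ℝ)-1)*(s:ℝ) = (((k-1)*s : ℕ) : ℝ) := by
    push_cast [Nat.cast_sub (show 1 ≤ k by omega)]
    ring
  have hvf : vf k n s = (k-1)*s - 1 := by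
    rw [vf, htf, hcast, Nat.ceil_natCast]
  have hk1s : 1 ≤ (k-1)*s := by
    have : 1*1 ≤ (k-1)*s := Nat.mul_le_mul (by omega) hs1
    omega
  have hsum : (k-1)*s - 1 + s + 1 = k*s := by
    have h2 : (k-1)*s + s = k*s := by
      have : (k-1+1) = k := by omega
      calc (k-1)*s + s = (k-1+1)*s := by ring
        _ = k*s := by rw [this]
    omega
  set v := (k-1)*s - 1 with hv
  -- bounds
  have e1 : (m.choose s : ℝ) ≤ (m:ℝ)^s := by exact_mod_cast Nat.choose_le_pow m s
  have e2 : (n.choose v : ℝ) ≤ (n:ℝ)^v := by exact_mod_cast Nat.choose_le_pow n v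
  have hms : (m:ℝ)^s ≤ (n:ℝ)^s := by
    apply pow_le_pow_left₀ (by positivity)
    nlinarith [hmc]
  have hVle : ((v:ℕ):ℝ) ≤ ((k:ℝ)-1)*L := by
    have h1 : ((v:ℕ):ℝ) ≤ (((k-1)*s : ℕ):ℝ) := by
      exact_mod_cast Nat.sub_le _ _
    have h2 : (((k-1)*s : ℕ):ℝ) = ((k:ℝ)-1)*(s:ℝ) := hcast.symm
    rw [h2] at h1
    calc ((v:ℕ):ℝ) ≤ ((k:ℝ)-1)*(s:ℝ) := h1
      _ ≤ ((k:ℝ)-1)*L := by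
          apply mul_le_mul_of_nonneg_left hreg (by linarith)
  set M := ((k:ℝ)-1)*L with hM
  have hM1 : 1 ≤ M := by nlinarith
  have e3 : ((v:ℕ):ℝ)^(k*s) ≤ Real.exp ((k:ℝ)*((k:ℝ)-1)*L^2) := by
    have h1 : ((v:ℕ):ℝ)^(k*s) ≤ M^(k*s) := pow_le_pow_left₀ (by positivity) hVle _
    have h2 : M^(k*s) = Real.exp ((k*s : ℕ) * Real.log M) := by
      rw [← Real.exp_log (show (0:ℝ) < M^(k*s) by positivity), Real.log_pow]
    have h3 : ((k*s : ℕ):ℝ) * Real.log M ≤ (k:ℝ)*((k:ℝ)-1)*L^2 := by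
      have hlogM0 : 0 ≤ Real.log M := Real.log_nonneg hM1
      have hlogM : Real.log M ≤ M := Real.log_le_self (by linarith)
      have hks : ((k*s : ℕ):ℝ) ≤ (k:ℝ)*L := by
        push_cast
        nlinarith [hreg]
      calc ((k*s : ℕ):ℝ) * Real.log M ≤ ((k:ℝ)*L) * Real.log M := by
            apply mul_le_mul_of_nonneg_right hks hlogM0
        _ ≤ ((k:ℝ)*L) * M := by
            apply mul_le_mul_of_nonneg_left hlogM (by nlinarith)
        _ = (k:ℝ)*((k:ℝ)-1)*L^2 := by rw [hM]; ring
    calc ((v:ℕ):ℝ)^(k*s) ≤ M^(k*s) := h1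
      _ = Real.exp ((k*s : ℕ) * Real.log M) := h2
      _ ≤ Real.exp ((k:ℝ)*((k:ℝ)-1)*L^2) := Real.exp_le_exp.mpr h3
  -- assemble
  have hnpow : (n:ℝ)^(k*s) = (n:ℝ)^v * (n:ℝ)^s * (n:ℝ) := by
    rw [← hsum, pow_add, pow_add, pow_one]
  have hnum : (m.choose s : ℝ) * (n.choose v : ℝ) * ((v:ℕ):ℝ)^(k*s)
      ≤ (n:ℝ)^s * (n:ℝ)^v * Real.exp ((k:ℝ)*((k:ℝ)-1)*L^2) := by
    have c1 : (0:ℝ) ≤ (n.choose v : ℝ) := by positivity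
    have c2 : (0:ℝ) ≤ ((v:ℕ):ℝ)^(k*s) := by positivity
    exact mul_le_mul (mul_le_mul (le_trans e1 hms) e2 c1 (by positivity)) e3 c2 (by positivity)
  rw [hvf]
  rw [div_le_div_iff₀ (by positivity) (by linarith)]
  calc (m.choose s : ℝ) * (n.choose v : ℝ) * ((v:ℕ):ℝ)^(k*s) * (n:ℝ)
      ≤ ((n:ℝ)^s * (n:ℝ)^v * Real.exp ((k:ℝ)*((k:ℝ)-1)*L^2)) * (n:ℝ) := by
        apply mul_le_mul_of_nonneg_right hnum (by linarith)
    _ = Real.exp ((k:ℝ)*((k:ℝ)-1)*L^2) * (n:ℝ)^(k*s) := by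
        rw [hnpow]; ring

lemma regimeB (k n m : ℕ) (c : ℝ) (hk : 3 ≤ k) (hc : 0 < c) (hmc : (m:ℝ) ≤ c*(n:ℝ))
    (s : ℕ) (hsm : s ≤ m) (hL1 : 1 ≤ Real.log (Real.log n))
    (hreg : ¬ ((s:ℝ) ≤ Real.log (Real.log n))) (hsn : (s:ℝ) < (n:ℝ)/(k:ℝ)) :
    (m.choose s : ℝ) * (n.choose (vf k n s) : ℝ) * ((vf k n s : ℝ))^(k*s) / (n:ℝ)^(k*s)
      ≤ c^s := by
  push_neg at hreg
  have hkR : (3:ℝ) ≤ (k:ℝ) := by exact_mod_cast hk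
  have hsR : (1:ℝ) ≤ (s:ℝ) := by linarith
  have hs1 : 1 ≤ s := by exact_mod_cast hsR
  have hm1 : 1 ≤ m := le_trans hs1 hsm
  have hmR : (1:ℝ) ≤ (m:ℝ) := by exact_mod_cast hm1
  have hks0 : 0 < k*s := by positivity
  have hkn : (k:ℝ)*(s:ℝ) < (n:ℝ) := by
    rw [lt_div_iff₀ (by linarith : (0:ℝ) < (k:ℝ))] at hsn
    linarith [hsn]
  have hnR : (1:ℝ) ≤ (n:ℝ) := by nlinarith
  have htf : tf k n s = ((k:ℝ)-1-xval k n s)*s := by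
    rw [tf, if_neg (by push_neg; exact hreg), if_pos hsn]
  set x := xval k n s with hxd
  -- positivity of x and the defining identity
  have hlogk : 0 < Real.log k := Real.log_pos (by linarith)
  have hnum : 0 < Real.logb k (((k:ℝ)-1) * Real.exp k) := by
    apply Real.logb_pos (by linarith)
    nlinarith [Real.one_le_exp (show (0:ℝ) ≤ (k:ℝ) by linarith)]
  have hden : 0 < Real.logb k ((n:ℝ)/(s:ℝ)) - 1 := by
    have h1 : (k:ℝ) < (n:ℝ)/(s:ℝ) := by
      rw [lt_div_iff₀ (by linarith : (0:ℝ) < (s:ℝ))]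
      nlinarith
    have h2 : Real.log (k:ℝ) < Real.log ((n:ℝ)/(s:ℝ)) :=
      Real.log_lt_log (by linarith) h1
    have : 1 < Real.logb k ((n:ℝ)/(s:ℝ)) := by
      rw [Real.logb, lt_div_iff₀ hlogk]
      linarith
    linarith
  have hx : 0 < x := by
    rw [hxd, xval]
    exact div_pos hnum hden
  have hxdef : x * (Real.log ((n:ℝ)/(s:ℝ)) - Real.log k) = Real.log ((k:ℝ)-1) + k := by
    have h0 : x * (Real.logb k ((n:ℝ)/(s:ℝ)) - 1) = Real.logb k (((k:ℝ)-1) * Real.exp k) := by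
      rw [hxd, xval, div_mul_cancel₀]
      exact ne_of_gt hden
    have h1 := congrArg (fun y => y * Real.log k) h0
    simp only [Real.logb] at h1
    have h2 : x * ((Real.log ((n:ℝ)/(s:ℝ)) / Real.log k - 1) * Real.log k)
        = Real.log (((k:ℝ)-1) * Real.exp k) / Real.log k * Real.log k := by
      rw [← mul_assoc]
      exact h1
    rw [div_mul_cancel₀ _ (ne_of_gt hlogk)] at h2
    have h3 : (Real.log ((n:ℝ)/(s:ℝ)) / Real.log k - 1) * Real.log k
        = Real.log ((n:ℝ)/(s:ℝ)) - Real.log k := by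
      field_simp
    rw [h3] at h2
    rw [h2, Real.log_mul (by linarith) (ne_of_gt (Real.exp_pos _)), Real.log_exp]
  -- degenerate case vf = 0
  rcases Nat.eq_zero_or_pos (vf k n s) with hv0 | hv0
  · rw [hv0]
    rw [Nat.cast_zero, zero_pow (by omega : k*s ≠ 0)]
    have : (m.choose s : ℝ) * (n.choose 0 : ℝ) * 0 / (n:ℝ)^(k*s) = 0 := by ring
    rw [this]
    positivity
  · -- main case
    set V := ((vf k n s : ℕ) : ℝ) with hVd
    have hV1 : (1:ℝ) ≤ V := by
      rw [hVd]
      exact_mod_cast Nat.one_le_iff_ne_zero.mpr (Nat.pos_iff_ne_zero.mp hv0)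
    have ht1 : (1:ℝ) < tf k n s := by
      by_contra h
      push_neg at h
      have : ⌈tf k n s⌉₊ ≤ 1 := Nat.ceil_le.mpr (by exact_mod_cast h)
      rw [vf] at hv0
      omega
    have hVt : V ≤ ((k:ℝ)-1-x)*(s:ℝ) := by
      have hceil : (⌈tf k n s⌉₊ : ℝ) < tf k n s + 1 := Nat.ceil_lt_add_one (by linarith)
      have hge1 : 1 ≤ ⌈tf k n s⌉₊ := by rw [vf] at hv0; omega
      have hcast : V = (⌈tf k n s⌉₊ : ℝ) - 1 := by
        rw [hVd, vf, Nat.cast_sub hge1, Nat.cast_one]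
      rw [hcast, ← htf]
      linarith
    -- exp forms
    have hVpos : (0:ℝ) < V := by linarith
    have a1 : (m.choose s : ℝ) ≤ Real.exp ((s:ℝ) * (1 + Real.log m - Real.log s)) :=
      choose_le_exp m s hs1 hm1
    have a2 : (n.choose (vf k n s) : ℝ)
        ≤ Real.exp (V * (1 + Real.log n - Real.log V)) := by
      have := choose_le_exp n (vf k n s) hv0 (by exact_mod_cast hnR)
      exact this
    have a3 : V^(k*s) = Real.exp (((k*s:ℕ):ℝ) * Real.log V) := by
      rw [← Real.exp_log (show (0:ℝ) < V^(k*s) by positivity), Real.log_pow]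
    have a4 : (n:ℝ)^(k*s) = Real.exp (((k*s:ℕ):ℝ) * Real.log n) := by
      rw [← Real.exp_log (show (0:ℝ) < (n:ℝ)^(k*s) by positivity), Real.log_pow]
    have hkey := key_log_ineq k hk c (s:ℝ) V (n:ℝ) (m:ℝ) x hsR hV1 hVt hx
      (by push_cast; linarith) hmR hmc hc
      (by rw [Real.log_div (by linarith) (by linarith)] at hxdef ⊢; exact hxdef)
    have hcs : (c:ℝ)^s = Real.exp ((s:ℝ) * Real.log c) := by
      rw [← Real.exp_log (show (0:ℝ) < c^s by positivity), Real.log_pow]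
    calc (m.choose s : ℝ) * (n.choose (vf k n s) : ℝ) * V^(k*s) / (n:ℝ)^(k*s)
        ≤ Real.exp ((s:ℝ) * (1 + Real.log m - Real.log s))
            * Real.exp (V * (1 + Real.log n - Real.log V))
            * Real.exp (((k*s:ℕ):ℝ) * Real.log V) / Real.exp (((k*s:ℕ):ℝ) * Real.log n) := by
          rw [a3, a4]
          apply (div_le_div_iff_of_pos_right (Real.exp_pos _)).mpr
          apply mul_le_mul_of_nonneg_right _ (Real.exp_pos _).le
          exact mul_le_mul a1 a2 (by positivity) (Real.exp_pos _).le
      _ = Real.exp ((s:ℝ) * (1 + Real.log m - Real.log s)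
            + V * (1 + Real.log n - Real.log V)
            + (((k*s:ℕ):ℝ)) * Real.log V - (((k*s:ℕ):ℝ)) * Real.log n) := by
          rw [← Real.exp_add, ← Real.exp_add, ← Real.exp_sub]
      _ ≤ Real.exp ((s:ℝ) * Real.log c) := by
          apply Real.exp_le_exp.mpr
          push_cast
          nlinarith [hkey]
      _ = c^s := hcs.symm

lemma master_bound (k n M : ℕ) (c : ℝ) (hk : 3 ≤ k) (hc0 : 0 < c) (hc1 : c < 1)
    (hmc : (M:ℝ) ≤ c*(n:ℝ)) (hn1 : 1 ≤ n) (hL1 : 1 ≤ Real.log (Real.log n))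
    (hside : ((k:ℝ)-1) * Real.log (Real.log n) ≤ (n:ℝ)) :
    probStar n M k (fun ω => ¬ PropE ω)
      ≤ (Real.log (Real.log n) + 1)
          * (Real.exp ((k:ℝ)*((k:ℝ)-1)*(Real.log (Real.log n))^2) / n)
        + c ^ (⌊Real.log (Real.log n)⌋₊ + 1) / (1 - c) := by
  have hkR : (3:ℝ) ≤ (k:ℝ) := by exact_mod_cast hk
  have hnR : (1:ℝ) ≤ (n:ℝ) := by exact_mod_cast hn1
  set L := Real.log (Real.log n) with hLdef
  set Bad : Finset (Fin M) → Finset (Fin M → Fin k → Fin n) := fun E' =>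
    Finset.univ.filter (fun ω => (((edgeVerts ω E').card : ℝ) < tf k n E'.card)) with hBad
  -- step 1 : inclusion
  have hsubset : Finset.univ.filter (fun ω : Fin M → Fin k → Fin n => ¬ PropE ω)
      ⊆ (Finset.univ : Finset (Fin M)).powerset.biUnion Bad := by
    intro ω hω
    rw [Finset.mem_filter] at hω
    have hnot := hω.2
    rw [PropE, not_and_or] at hnot
    rcases hnot with h | h
    · push_neg at h
      obtain ⟨E', h1, h2, h3⟩ := h
      refine Finset.mem_biUnion.mpr ⟨E', Finset.mem_powerset.mpr (Finset.subset_univ _), ?_⟩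
      rw [hBad, Finset.mem_filter]
      refine ⟨Finset.mem_univ _, ?_⟩
      rw [tf, if_neg (not_le.mpr h1), if_pos h2]
      exact h3
    · push_neg at h
      obtain ⟨E', h1, h3⟩ := h
      refine Finset.mem_biUnion.mpr ⟨E', Finset.mem_powerset.mpr (Finset.subset_univ _), ?_⟩
      rw [hBad, Finset.mem_filter]
      refine ⟨Finset.mem_univ _, ?_⟩
      rw [tf, if_pos h1]
      exact h3
  -- step 2 : per-E' bound
  set gnat : ℕ → ℕ := fun s => if s = 0 then 0
    else n.choose (vf k n s) * ((vf k n s ^ k)^s * (n^k)^(M-s)) with hgnat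
  have hbadcard : ∀ E' : Finset (Fin M), (Bad E').card ≤ gnat E'.card := by
    intro E'
    rcases Nat.eq_zero_or_pos E'.card with h0 | hpos
    · have htf0 : tf k n E'.card = 0 := by
        rw [h0, tf]
        rw [if_pos (by simpa using (by linarith : (0:ℝ) ≤ L))]
        simp
      have hB0 : Bad E' = ∅ := by
        rw [hBad]
        apply Finset.filter_false_of_mem
        intro ω _
        rw [htf0]
        push_neg
        positivity
      rw [hB0]
      simp
    · set s := E'.card with hs
      by_cases htf0 : tf k n s ≤ 0
      · have hB0 : Bad E' = ∅ := by
          rw [hBad]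
          apply Finset.filter_false_of_mem
          intro ω _
          push_neg
          have : (0:ℝ) ≤ ((edgeVerts ω E').card : ℝ) := by positivity
          linarith
        rw [hB0]
        simp
      · push_neg at htf0
        have hceil1 : 1 ≤ ⌈tf k n s⌉₊ := Nat.one_le_iff_ne_zero.mpr
          (by positivity : (0:ℕ) < ⌈tf k n s⌉₊).ne'
        -- vf ≤ n
        have hvfcast : ((vf k n s : ℕ) : ℝ) < tf k n s := by
          have hceil : (⌈tf k n s⌉₊ : ℝ) < tf k n s + 1 := Nat.ceil_lt_add_one (le_of_lt htf0)
          rw [vf, Nat.cast_sub hceil1, Nat.cast_one]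
          linarith
        have hvn : vf k n s ≤ n := by
          have htfn : tf k n s ≤ (n:ℝ) := by
            rw [tf] at htf0 ⊢
            by_cases hb1 : (s:ℝ) ≤ L
            · rw [if_pos hb1] at htf0 ⊢
              calc ((k:ℝ)-1)*(s:ℝ) ≤ ((k:ℝ)-1)*L := by
                    apply mul_le_mul_of_nonneg_left hb1 (by linarith)
                _ ≤ (n:ℝ) := hside
            · rw [if_neg hb1] at htf0 ⊢
              by_cases hb2 : (s:ℝ) < (n:ℝ)/(k:ℝ)
              · rw [if_pos hb2] at htf0 ⊢
                have hs1 : (1:ℝ) ≤ (s:ℝ) := by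
                  push_neg at hb1
                  linarith
                have hkn : (k:ℝ)*(s:ℝ) < (n:ℝ) := by
                  rw [lt_div_iff₀ (by linarith : (0:ℝ) < (k:ℝ))] at hb2
                  linarith
                have hx0 : 0 ≤ xval k n s := by
                  rw [xval]
                  apply div_nonneg
                  · apply Real.logb_nonneg (by exact_mod_cast (by omega : 1 < k))
                    nlinarith [Real.one_le_exp (show (0:ℝ) ≤ (k:ℝ) by linarith)]
                  · have h1 : (k:ℝ) < (n:ℝ)/(s:ℝ) := by
                      rw [lt_div_iff₀ (by linarith : (0:ℝ) < (s:ℝ))]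
                      nlinarith
                    have h2 : Real.log (k:ℝ) < Real.log ((n:ℝ)/(s:ℝ)) :=
                      Real.log_lt_log (by linarith) h1
                    have hlogk : 0 < Real.log k := Real.log_pos (by linarith)
                    have : 1 < Real.logb k ((n:ℝ)/(s:ℝ)) := by
                      rw [Real.logb, lt_div_iff₀ hlogk]
                      linarith
                    linarith
                calc ((k:ℝ)-1-xval k n s)*(s:ℝ) ≤ ((k:ℝ)-1)*(s:ℝ) := by nlinarith
                  _ ≤ (k:ℝ)*(s:ℝ) := by nlinarith
                  _ ≤ (n:ℝ) := by linarith
              · rw [if_neg hb2] at htf0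
                linarith
          have : ((vf k n s : ℕ) : ℝ) ≤ (n:ℝ) := le_of_lt (lt_of_lt_of_le hvfcast htfn)
          exact_mod_cast this
        have hsub2 : Bad E' ⊆ Finset.univ.filter
            (fun ω : Fin M → Fin k → Fin n => (edgeVerts ω E').card ≤ vf k n s) := by
          intro ω hω
          simp only [hBad, Finset.mem_filter] at hω ⊢
          refine ⟨hω.1, ?_⟩
          have h1 : (edgeVerts ω E').card < ⌈tf k n s⌉₊ := Nat.lt_ceil.mpr hω.2
          rw [vf]
          omega
        calc (Bad E').card
            ≤ (Finset.univ.filter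
              (fun ω : Fin M → Fin k → Fin n =>
                (edgeVerts ω E').card ≤ vf k n s)).card := Finset.card_le_card hsub2
          _ ≤ n.choose (vf k n s) * ((vf k n s ^ k) ^ E'.card * (n ^ k) ^ (M - E'.card)) :=
              count_small_span n M k E' (vf k n s) hvn
          _ = gnat s := by
              simp only [hgnat]
              rw [if_neg (by omega : ¬ s = 0)]
    -- step 3 : sum over powerset (ℕ)
  have hsum1 : (Finset.univ.filter (fun ω : Fin M → Fin k → Fin n => ¬ PropE ω)).card
      ≤ ∑ s ∈ Finset.range (M+1), Nat.choose M s * gnat s := by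
    calc (Finset.univ.filter (fun ω : Fin M → Fin k → Fin n => ¬ PropE ω)).card
        ≤ ((Finset.univ : Finset (Fin M)).powerset.biUnion Bad).card :=
          Finset.card_le_card hsubset
      _ ≤ ∑ E' ∈ (Finset.univ : Finset (Fin M)).powerset, (Bad E').card :=
          Finset.card_biUnion_le
      _ ≤ ∑ E' ∈ (Finset.univ : Finset (Fin M)).powerset, gnat E'.card :=
          Finset.sum_le_sum (fun E' _ => hbadcard E')
      _ = ∑ s ∈ Finset.range ((Finset.univ : Finset (Fin M)).card + 1),
            ((Finset.univ : Finset (Fin M)).card).choose s • gnat s :=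
          Finset.sum_powerset_apply_card gnat
      _ = ∑ s ∈ Finset.range (M+1), Nat.choose M s * gnat s := by
          simp [Finset.card_univ, smul_eq_mul]
  -- step 4 : to ℝ
  have hcardΩ : (Fintype.card (Fin M → Fin k → Fin n) : ℝ) = (n:ℝ)^(k*M) := by
    rw [Fintype.card_fun, Fintype.card_fun, Fintype.card_fin, Fintype.card_fin,
      Fintype.card_fin]
    push_cast
    rw [← pow_mul]
  have hprob : probStar n M k (fun ω => ¬ PropE ω)
      ≤ ∑ s ∈ Finset.range (M+1), (Nat.choose M s : ℝ) * (gnat s : ℝ) / (n:ℝ)^(k*M) := by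
    rw [probStar, hcardΩ]
    rw [← Finset.sum_div]
    apply (div_le_div_iff_of_pos_right (by positivity : (0:ℝ) < (n:ℝ)^(k*M))).mpr
    have : ((∑ s ∈ Finset.range (M+1), Nat.choose M s * gnat s : ℕ) : ℝ)
        = ∑ s ∈ Finset.range (M+1), (Nat.choose M s : ℝ) * (gnat s : ℝ) := by
      push_cast
      rfl
    rw [← this]
    have hfix : (@Finset.filter (Fin M → Fin k → Fin n) (fun ω => ¬PropE ω)
          (fun a => Classical.propDecidable ¬PropE a) Finset.univ)
        = (@Finset.filter (Fin M → Fin k → Fin n) (fun ω => ¬PropE ω)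
          (fun a => instDecidableNot) Finset.univ) := by
      apply Finset.filter_congr_decidable
    rw [hfix]
    exact_mod_cast hsum1
  set TA := Real.exp ((k:ℝ)*((k:ℝ)-1)*L^2) / (n:ℝ) with hTA
  have hTA0 : (0:ℝ) ≤ TA := by positivity
  have hterm : ∀ s ∈ Finset.range (M+1),
      (Nat.choose M s : ℝ) * (gnat s : ℝ) / (n:ℝ)^(k*M)
        ≤ (if (s:ℝ) ≤ L then TA else 0) + (if L < (s:ℝ) then c^s else 0) := by
    intro s hs
    have hsM : s ≤ M := by
      have := Finset.mem_range.mp hs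
      omega
    rcases Nat.eq_zero_or_pos s with h0 | hpos
    · subst h0
      have : (gnat 0 : ℝ) = 0 := by simp [hgnat]
      rw [this]
      rw [if_pos (by simpa using (by linarith : (0:ℝ) ≤ L)),
        if_neg (by simp; linarith : ¬ L < ((0:ℕ):ℝ))]
      simp [hTA0]
    · have hgs : (gnat s : ℝ) = (n.choose (vf k n s) : ℝ) * ((vf k n s : ℕ) : ℝ)^(k*s)
          * ((n:ℝ)^k)^(M-s) := by
        simp only [hgnat]
        rw [if_neg (by omega : ¬ s = 0)]
        push_cast
        rw [pow_mul]
        ring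
      have hexp : k*s + k*(M-s) = k*M := by
        rw [← Nat.mul_add, Nat.add_sub_cancel' hsM]
      have hpowsplit : (n:ℝ)^(k*M) = (n:ℝ)^(k*s) * ((n:ℝ)^k)^(M-s) := by
        rw [← pow_mul, ← pow_add, hexp]
      have hterm_eq : (Nat.choose M s : ℝ) * (gnat s : ℝ) / (n:ℝ)^(k*M)
          = (Nat.choose M s : ℝ) * (n.choose (vf k n s) : ℝ) * ((vf k n s : ℕ) : ℝ)^(k*s)
            / (n:ℝ)^(k*s) := by
        rw [hgs, hpowsplit]
        have hz : ((n:ℝ)^k)^(M-s) ≠ 0 := by positivity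
        have hz2 : (n:ℝ)^(k*s) ≠ 0 := by positivity
        field_simp
      rw [hterm_eq]
      by_cases hb1 : (s:ℝ) ≤ L
      · rw [if_pos hb1, if_neg (not_lt.mpr hb1), add_zero, hTA]
        exact regimeA k n M c hk hc0.le hc1.le hmc hn1 s hpos hb1 hL1
      · rw [if_neg hb1, if_pos (not_le.mp hb1), zero_add]
        by_cases hb2 : (s:ℝ) < (n:ℝ)/(k:ℝ)
        · exact regimeB k n M c hk hc0 hmc s hsM hL1 hb1 hb2
        · have hvf0 : vf k n s = 0 := by
            rw [vf, tf, if_neg hb1, if_neg hb2]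
            simp
          rw [hvf0]
          rw [Nat.cast_zero, zero_pow (by positivity : k*s ≠ 0)]
          have hz : (Nat.choose M s : ℝ) * (n.choose 0 : ℝ) * 0 / (n:ℝ)^(k*s) = 0 := by ring
          rw [hz]
          positivity
  -- step 6 : sum the bounds
  have hsum2 : ∑ s ∈ Finset.range (M+1),
        ((if (s:ℝ) ≤ L then TA else 0) + (if L < (s:ℝ) then c^s else 0))
      ≤ (L+1) * TA + c ^ (⌊L⌋₊ + 1) / (1 - c) := by
    rw [Finset.sum_add_distrib]
    have hb1 : ∑ s ∈ Finset.range (M+1), (if (s:ℝ) ≤ L then TA else 0) ≤ (L+1) * TA := by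
      rw [← Finset.sum_filter, Finset.sum_const, nsmul_eq_mul]
      have hcard1 : (((Finset.range (M+1)).filter (fun s : ℕ => (s:ℝ) ≤ L)).card : ℝ) ≤ L + 1 := by
        have h1 : ((Finset.range (M+1)).filter (fun s : ℕ => (s:ℝ) ≤ L)).card ≤ ⌊L⌋₊ + 1 := by
          have hss : (Finset.range (M+1)).filter (fun s : ℕ => (s:ℝ) ≤ L)
              ⊆ Finset.range (⌊L⌋₊ + 1) := by
            intro s hs'
            rw [Finset.mem_filter] at hs'
            rw [Finset.mem_range]
            exact Nat.lt_succ_of_le (Nat.le_floor hs'.2)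
          calc ((Finset.range (M+1)).filter (fun s : ℕ => (s:ℝ) ≤ L)).card
              ≤ (Finset.range (⌊L⌋₊ + 1)).card := Finset.card_le_card hss
            _ = ⌊L⌋₊ + 1 := Finset.card_range _
        calc (((Finset.range (M+1)).filter (fun s : ℕ => (s:ℝ) ≤ L)).card : ℝ)
            ≤ ((⌊L⌋₊ : ℕ) : ℝ) + 1 := by exact_mod_cast h1
          _ ≤ L + 1 := by
              have := Nat.floor_le (show (0:ℝ) ≤ L by linarith)
              linarith
      exact mul_le_mul_of_nonneg_right hcard1 hTA0
    have hb2 : ∑ s ∈ Finset.range (M+1), (if L < (s:ℝ) then c^s else 0)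
        ≤ c ^ (⌊L⌋₊ + 1) / (1 - c) := by
      set s₀ := ⌊L⌋₊ + 1 with hs₀
      set T := max (M+1) s₀ with hT
      have hsub : (Finset.range (M+1)).filter (fun s : ℕ => L < (s:ℝ)) ⊆ Finset.Ico s₀ T := by
        intro s hs'
        rw [Finset.mem_filter, Finset.mem_range] at hs'
        rw [Finset.mem_Ico]
        constructor
        · have : ⌊L⌋₊ < s := (Nat.floor_lt (by linarith : (0:ℝ) ≤ L)).mpr hs'.2
          omega
        · calc s < M+1 := hs'.1
            _ ≤ T := le_max_left _ _
      have h1c : (0:ℝ) < 1 - c := by linarith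
      calc ∑ s ∈ Finset.range (M+1), (if L < (s:ℝ) then c^s else 0)
          = ∑ s ∈ (Finset.range (M+1)).filter (fun s : ℕ => L < (s:ℝ)), c^s := by
            rw [Finset.sum_filter]
        _ ≤ ∑ s ∈ Finset.Ico s₀ T, c^s := by
            apply Finset.sum_le_sum_of_subset_of_nonneg hsub
            intro i _ _
            positivity
        _ = (c^T - c^(s₀))/(c-1) := geom_sum_Ico (by intro h; subst h; linarith : c ≠ 1)
              (le_max_right _ _)
        _ = (c^(s₀) - c^T)/(1-c) := by
            have hne1 : c - 1 ≠ 0 := by linarith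
            have hne2 : (1:ℝ) - c ≠ 0 := by linarith
            field_simp
            ring
        _ ≤ c^(s₀)/(1-c) := by
            apply (div_le_div_iff_of_pos_right h1c).mpr
            nlinarith [pow_nonneg hc0.le T]
    linarith [hb1, hb2]
  calc probStar n M k (fun ω => ¬ PropE ω)
      ≤ ∑ s ∈ Finset.range (M+1), (Nat.choose M s : ℝ) * (gnat s : ℝ) / (n:ℝ)^(k*M) := hprob
    _ ≤ ∑ s ∈ Finset.range (M+1),
        ((if (s:ℝ) ≤ L then TA else 0) + (if L < (s:ℝ) then c^s else 0)) :=
        Finset.sum_le_sum hterm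
    _ ≤ (L+1) * TA + c ^ (⌊L⌋₊ + 1) / (1 - c) := hsum2

lemma hLtop : Tendsto (fun n : ℕ => Real.log (Real.log n)) atTop atTop :=
  (Real.tendsto_log_atTop.comp Real.tendsto_log_atTop).comp tendsto_natCast_atTop_atTop

lemma logsq_littleo : (fun u : ℝ => (Real.log u)^2) =o[atTop] (fun u : ℝ => u) := by
  have h := isLittleO_log_rpow_atTop (show (0:ℝ) < 1/2 by norm_num)
  have h2 := h.mul h
  apply h2.congr' (by filter_upwards with u; ring)
  filter_upwards [eventually_ge_atTop (0:ℝ)] with u hu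
  rw [← Real.rpow_add' hu (by norm_num)]
  norm_num [Real.rpow_one]

lemma exponent_atBot (K : ℝ) (hK : 0 ≤ K) :
    Tendsto (fun u : ℝ => K * (Real.log u)^2 - u) atTop atBot := by
  have hev : ∀ᶠ u : ℝ in atTop, K * (Real.log u)^2 - u ≤ -u/2 := by
    have hb := (isLittleO_iff.mp logsq_littleo)
      (show (0:ℝ) < 1/(2*(K+1)) by positivity)
    filter_upwards [hb, eventually_ge_atTop (0:ℝ)] with u hu hu0
    have h1 : (Real.log u)^2 ≤ 1/(2*(K+1)) * u := by
      have : ‖(Real.log u)^2‖ = (Real.log u)^2 := by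
        rw [Real.norm_eq_abs, abs_of_nonneg (sq_nonneg _)]
      rw [this, Real.norm_eq_abs, abs_of_nonneg hu0] at hu
      exact hu
    have h2 : K * (Real.log u)^2 ≤ K * (1/(2*(K+1)) * u) :=
      mul_le_mul_of_nonneg_left h1 hK
    have h3 : K * (1/(2*(K+1)) * u) ≤ u/2 := by
      rw [div_mul_eq_mul_div, ← mul_div_assoc]
      rw [div_le_div_iff₀ (by positivity) (by norm_num)]
      nlinarith [sq_nonneg K]
    linarith
  apply tendsto_atBot_mono' atTop hev
  have : Tendsto (fun u : ℝ => -u) atTop atBot := tendsto_neg_atTop_atBot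
  exact this.atBot_div_const (by norm_num)

lemma term1_tendsto (k : ℕ) (hk : 3 ≤ k) :
    Tendsto (fun n : ℕ => (Real.log (Real.log n) + 1)
      * (Real.exp ((k:ℝ)*((k:ℝ)-1)*(Real.log (Real.log n))^2) / n)) atTop (nhds 0) := by
  have hkR : (3:ℝ) ≤ (k:ℝ) := by exact_mod_cast hk
  set K := (k:ℝ)*((k:ℝ)-1) with hK
  have hK0 : 0 ≤ K := by nlinarith
  -- upper bound by exp((K+2) L^2 - log n)
  have hup : ∀ᶠ n : ℕ in atTop,
      (Real.log (Real.log n) + 1) * (Real.exp (K*(Real.log (Real.log n))^2) / n)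
        ≤ Real.exp ((K+2)*(Real.log (Real.log n))^2 - Real.log n) := by
    filter_upwards [hLtop.eventually_ge_atTop 1,
      (eventually_ge_atTop 1 : ∀ᶠ n : ℕ in atTop, 1 ≤ n)] with n hL1 hn1
    set L := Real.log (Real.log n) with hLd
    have hnR : (1:ℝ) ≤ (n:ℝ) := by exact_mod_cast hn1
    have hinv : (1:ℝ)/(n:ℝ) = Real.exp (-Real.log n) := by
      rw [Real.exp_neg, Real.exp_log (by linarith), one_div]
    have h1 : L + 1 ≤ Real.exp (2*L^2) := by
      have e1 : L + 1 ≤ 2*L^2 := by nlinarith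
      have e2 : 2*L^2 + 1 ≤ Real.exp (2*L^2) := by
        have := Real.add_one_le_exp (2*L^2); linarith
      linarith
    calc (L + 1) * (Real.exp (K*L^2) / n)
        = (L+1) * Real.exp (K*L^2) * (1/(n:ℝ)) := by ring
      _ ≤ Real.exp (2*L^2) * Real.exp (K*L^2) * (1/(n:ℝ)) := by
          apply mul_le_mul_of_nonneg_right (mul_le_mul_of_nonneg_right h1 (Real.exp_pos _).le)
          positivity
      _ = Real.exp ((K+2)*L^2 - Real.log n) := by
          rw [hinv, ← Real.exp_add, ← Real.exp_add]
          congr 1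
          ring
  have hcomp : Tendsto (fun n : ℕ => (K+2)*(Real.log (Real.log n))^2 - Real.log n)
      atTop atBot := by
    have hg := exponent_atBot (K+2) (by linarith)
    exact hg.comp (Real.tendsto_log_atTop.comp tendsto_natCast_atTop_atTop)
  have hexp0 : Tendsto (fun n : ℕ =>
      Real.exp ((K+2)*(Real.log (Real.log n))^2 - Real.log n)) atTop (nhds 0) :=
    Real.tendsto_exp_atBot.comp hcomp
  apply squeeze_zero' ?_ hup hexp0
  filter_upwards [eventually_ge_atTop 1, hLtop.eventually_ge_atTop 1] with n hn1 hL1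
  have hnR : (1:ℝ) ≤ (n:ℝ) := by exact_mod_cast hn1
  have hn0 : (0:ℝ) < (n:ℝ) := by linarith
  have h1 : (0:ℝ) ≤ Real.log (Real.log n) + 1 := by linarith
  have h2 : (0:ℝ) ≤ Real.exp ((k:ℝ)*((k:ℝ)-1)*(Real.log (Real.log n))^2) / n := by positivity
  exact mul_nonneg h1 h2

lemma term2_tendsto (c : ℝ) (hc0 : 0 < c) (hc1 : c < 1) :
    Tendsto (fun n : ℕ => c ^ (⌊Real.log (Real.log n)⌋₊ + 1) / (1 - c)) atTop (nhds 0) := by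
  have hfloor : Tendsto (fun n : ℕ => ⌊Real.log (Real.log n)⌋₊ + 1) atTop atTop := by
    exact (tendsto_add_atTop_nat 1).comp (tendsto_nat_floor_atTop.comp hLtop)
  have hpow : Tendsto (fun j : ℕ => c ^ j / (1-c)) atTop (nhds 0) := by
    have := (tendsto_pow_atTop_nhds_zero_of_lt_one hc0.le hc1).div_const (1-c)
    simpa using this
  exact hpow.comp hfloor

lemma probStar_compl (n M k : ℕ) (hn : 1 ≤ n) (P : (Fin M → Fin k → Fin n) → Prop) :
    probStar n M k P = 1 - probStar n M k (fun ω => ¬ P ω) := by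
  have hne : Nonempty (Fin M → Fin k → Fin n) := ⟨fun _ _ => ⟨0, hn⟩⟩
  have hpos : 0 < Fintype.card (Fin M → Fin k → Fin n) := Fintype.card_pos_iff.mpr hne
  have hposR : (0:ℝ) < (Fintype.card (Fin M → Fin k → Fin n) : ℝ) := by exact_mod_cast hpos
  rw [probStar, probStar]
  have hadd := Finset.card_filter_add_card_filter_not
    (s := (Finset.univ : Finset (Fin M → Fin k → Fin n))) (p := P)
  have hfix : ∀ (h : DecidablePred (fun ω : Fin M → Fin k → Fin n => ¬ P ω)),
      (@Finset.filter _ (fun ω => ¬ P ω) h Finset.univ).card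
        = (@Finset.filter _ (fun a => ¬ P a) (fun x => instDecidableNot) Finset.univ).card := by
    intro h
    congr!
  simp only [hfix] at hadd ⊢
  rw [eq_sub_iff_add_eq, ← add_div, div_eq_one_iff_eq (ne_of_gt hposR)]
  rw [← Finset.card_univ]
  exact_mod_cast hadd

lemma probStar_nonneg (n M k : ℕ) (P : (Fin M → Fin k → Fin n) → Prop) :
    0 ≤ probStar n M k P := by
  rw [probStar]
  positivity


/-- for `k ≥ 3` and `m ≤ c_k* n`, the probability that `H*_{n,m,k}` has
Property `𝓔` tends to `1` as `n → ∞`. -/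
theorem statement_6 (k : ℕ) (hk : 3 ≤ k) (ξ ck : ℝ) (hξpos : 0 < ξ)
    (hξ : (k : ℝ) = ξ * (1 - Real.exp (-ξ)) / (1 - Real.exp (-ξ) - ξ * Real.exp (-ξ)))
    (hξuniq : ∀ y : ℝ, 0 < y →
      (k : ℝ) = y * (1 - Real.exp (-y)) / (1 - Real.exp (-y) - y * Real.exp (-y)) → y = ξ)
    (hck : ck = ξ / (k * (1 - Real.exp (-ξ)) ^ (k - 1)))
    (m : ℕ → ℕ) (hm : ∀ n : ℕ, (m n : ℝ) ≤ ck * n) :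
    Tendsto (fun n : ℕ => probStar n (m n) k (fun ω => PropE ω)) atTop (nhds 1) := by

  obtain ⟨hc0, hc1⟩ := ck_lt_one k hk ξ ck hξpos hξ hξuniq hck
  have hkR : (3:ℝ) ≤ (k:ℝ) := by exact_mod_cast hk
  -- side conditions eventually
  have ev1 : ∀ᶠ n : ℕ in atTop, 1 ≤ Real.log (Real.log n) := hLtop.eventually_ge_atTop 1
  have ev2 : ∀ᶠ n : ℕ in atTop, 1 ≤ n := eventually_ge_atTop 1
  have ev4 : ∀ᶠ n : ℕ in atTop, 1 ≤ Real.log n :=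
    (Real.tendsto_log_atTop.comp tendsto_natCast_atTop_atTop).eventually_ge_atTop 1
  have ev3 : ∀ᶠ n : ℕ in atTop, ((k:ℝ)-1) * Real.log (Real.log n) ≤ (n:ℝ) := by
    have hb := (isLittleO_iff.mp Real.isLittleO_log_id_atTop)
      (show (0:ℝ) < 1/(k:ℝ) by positivity)
    have hb2 := tendsto_natCast_atTop_atTop.eventually hb
    filter_upwards [hb2, ev2, ev4] with n hlog hn1 hlogn1
    have hnR : (1:ℝ) ≤ (n:ℝ) := by exact_mod_cast hn1
    have h1 : Real.log n ≤ (1/(k:ℝ)) * n := by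
      simp only [id_eq, Real.norm_eq_abs] at hlog
      rw [abs_of_nonneg (show (0:ℝ) ≤ Real.log n by linarith),
        abs_of_nonneg (show (0:ℝ) ≤ (n:ℝ) by linarith)] at hlog
      exact hlog
    have h2 : Real.log (Real.log n) ≤ Real.log n :=
      Real.log_le_self (by linarith)
    calc ((k:ℝ)-1) * Real.log (Real.log n) ≤ ((k:ℝ)-1) * Real.log n := by
          apply mul_le_mul_of_nonneg_left h2 (by linarith)
      _ ≤ ((k:ℝ)-1) * ((1/(k:ℝ)) * n) := by
          apply mul_le_mul_of_nonneg_left h1 (by linarith)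
      _ ≤ (n:ℝ) := by
          rw [← mul_assoc]
          have : ((k:ℝ)-1) * (1/(k:ℝ)) ≤ 1 := by
            rw [mul_one_div, div_le_one (by linarith)]
            linarith
          nlinarith
  -- probability of failure tends to 0
  have h0 : Tendsto (fun n : ℕ => probStar n (m n) k (fun ω => ¬ PropE ω)) atTop (nhds 0) := by
    apply squeeze_zero' (g := fun n : ℕ =>
      (Real.log (Real.log n) + 1)
          * (Real.exp ((k:ℝ)*((k:ℝ)-1)*(Real.log (Real.log n))^2) / n)
        + ck ^ (⌊Real.log (Real.log n)⌋₊ + 1) / (1 - ck))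
    · filter_upwards with n
      exact probStar_nonneg n (m n) k _
    · filter_upwards [ev1, ev2, ev3] with n h1 h2 h3
      exact master_bound k n (m n) ck hk hc0 hc1 (hm n) h2 h1 h3
    · have := (term1_tendsto k hk).add (term2_tendsto ck hc0 hc1)
      simpa using this
  have hev : ∀ᶠ n : ℕ in atTop,
      (1 : ℝ) - probStar n (m n) k (fun ω => ¬ PropE ω)
        = probStar n (m n) k (fun ω => PropE ω) := by
    filter_upwards [ev2] with n hn1
    exact (probStar_compl n (m n) k hn1 (fun ω => PropE ω)).symm
  have hlim : Tendsto (fun n : ℕ =>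
      (1:ℝ) - probStar n (m n) k (fun ω => ¬ PropE ω)) atTop (nhds 1) := by
    have := tendsto_const_nhds (x := (1:ℝ)) (f := (atTop : Filter ℕ)) |>.sub h0
    simpa using this
  exact Tendsto.congr' hev hlim
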